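/- A standard graded Artinian Gorenstein algebra A = Q/Ann_f of socle degree 3, where f is a cubic form, has the Strong Lefschetz Property if and only if the Hessian determinant of f is not identically zero. -/

import Mathlib

open MvPolynomial

theorem pderiv_comm' {K : Type*} [CommSemiring K] {n : ℕ} (i j : Fin n)
    (p : MvPolynomial (Fin n) K) :
    pderiv i (pderiv j p) = pderiv j (pderiv i p) := by
  induction p using MvPolynomial.induction_on with
  | C a => simp
  | add p q hp hq => simp [hp, hq]
  | mul_X p k hp =>
      classical
      simp only [pderiv_mul, map_add, pderiv_mul, hp, pderiv_X]
      by_cases hik : k = i <;> by_cases hjk : k = j <;>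
        simp [Pi.single_apply, hik, hjk, apply_ite (pderiv i), apply_ite (pderiv j)] <;>
        ring

/-- The commutative subalgebra of `End_K(K[x₀,…,x_{n-1}])` generated by the
partial-derivative operators `∂/∂x_i`. -/
def pderivSet (K : Type*) [Field K] (n : ℕ) :
    Set (Module.End K (MvPolynomial (Fin n) K)) :=
  Set.range fun i : Fin n => (pderiv i).toLinearMap

noncomputable def diffOps (K : Type*) [Field K] (n : ℕ) :
    Subalgebra K (Module.End K (MvPolynomial (Fin n) K)) :=
  Algebra.adjoin K (pderivSet K n)

noncomputable instance diffOpsCommSemiring (K : Type*) [Field K] (n : ℕ) :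
    CommSemiring (diffOps K n) :=
  { (diffOps K n).toSemiring with
    mul_comm := (Algebra.isMulCommutative_adjoin (s := pderivSet K n) K (by
      rintro a ⟨i, rfl⟩ b ⟨j, rfl⟩
      exact LinearMap.ext fun p => by
        simpa [Module.End.mul_apply] using (pderiv_comm' (K := K) i j p))).is_comm.comm }

/-- The action of the polynomial ring of differential operators `Q = K[X₀,…,X_{n-1}]`
on `S = K[x₀,…,x_{n-1}]`: `diffOpApply α f` is the result of applying the differential
operator `α(∂/∂x₀, …, ∂/∂x_{n-1})` to `f`. -/
noncomputable def diffOpApply {K : Type*} [Field K] {n : ℕ}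
    (α f : MvPolynomial (Fin n) K) : MvPolynomial (Fin n) K :=
  ((MvPolynomial.aeval (fun i : Fin n =>
      (⟨(pderiv i).toLinearMap, Algebra.subset_adjoin ⟨i, rfl⟩⟩ : diffOps K n)) α :
    diffOps K n) : Module.End K (MvPolynomial (Fin n) K)) f

/-- The annihilator ideal `Ann_f ⊂ Q` of `f ∈ S`: the ideal of differential operators
killing `f` under the differentiation action of `Q` on `S`. -/
noncomputable def annIdeal {K : Type*} [Field K] {n : ℕ} (f : MvPolynomial (Fin n) K) :
    Ideal (MvPolynomial (Fin n) K) where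
  carrier := {α | diffOpApply α f = 0}
  zero_mem' := by simp [diffOpApply]
  add_mem' := by
    intro a b ha hb
    simp only [Set.mem_setOf_eq, diffOpApply, map_add] at *
    simp [LinearMap.add_apply, ha, hb]
  smul_mem' := by
    intro c x hx
    simp only [Set.mem_setOf_eq, diffOpApply, smul_eq_mul, map_mul] at *
    rw [Subalgebra.coe_mul, Module.End.mul_apply, hx, map_zero]

section Aux
variable {K : Type*} [Field K] {n : ℕ}

@[simp] lemma diffOpApply_X (i : Fin n) (f : MvPolynomial (Fin n) K) :
    diffOpApply (X i) f = pderiv i f := by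
  simp [diffOpApply]

@[simp] lemma diffOpApply_C (c : K) (f : MvPolynomial (Fin n) K) :
    diffOpApply (C c) f = c • f := by
  simp only [diffOpApply, aeval_C]
  rfl

@[simp] lemma diffOpApply_zero (f : MvPolynomial (Fin n) K) :
    diffOpApply (0 : MvPolynomial (Fin n) K) f = 0 := by
  simp [diffOpApply]

lemma diffOpApply_mul (α β f : MvPolynomial (Fin n) K) :
    diffOpApply (α * β) f = diffOpApply α (diffOpApply β f) := by
  simp only [diffOpApply, map_mul]
  rfl

lemma diffOpApply_add (α β f : MvPolynomial (Fin n) K) :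
    diffOpApply (α + β) f = diffOpApply α f + diffOpApply β f := by
  simp only [diffOpApply, map_add]
  rfl

lemma diffOpApply_smul (c : K) (α f : MvPolynomial (Fin n) K) :
    diffOpApply (c • α) f = c • diffOpApply α f := by
  rw [MvPolynomial.smul_eq_C_mul, diffOpApply_mul, diffOpApply_C]

lemma diffOpApply_sub (α β f : MvPolynomial (Fin n) K) :
    diffOpApply (α - β) f = diffOpApply α f - diffOpApply β f := by
  have h := diffOpApply_add (α - β) β f
  rw [sub_add_cancel] at h
  rw [h]; abel

lemma diffOpApply_sum {ι : Type*} (s : Finset ι) (g : ι → MvPolynomial (Fin n) K)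
    (f : MvPolynomial (Fin n) K) :
    diffOpApply (∑ i ∈ s, g i) f = ∑ i ∈ s, diffOpApply (g i) f := by
  classical
  induction s using Finset.induction with
  | empty => simp
  | insert _ _ h ih => rw [Finset.sum_insert h, Finset.sum_insert h, diffOpApply_add, ih]

end Aux

section Aux2
variable {K : Type*} [Field K] {n : ℕ}

lemma degree_fin (m : Fin n →₀ ℕ) : m.degree = ∑ i : Fin n, m i := by
  rw [Finsupp.degree]
  exact Finset.sum_subset (Finset.subset_univ _)
    (fun i _ hi => Finsupp.notMem_support_iff.mp hi)

lemma isHomog_zero_eq_C {p : MvPolynomial (Fin n) K} (hp : p.IsHomogeneous 0) :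
    p = C (coeff 0 p) := by
  ext m
  by_cases h : m = 0
  · subst h; simp
  · rw [coeff_C, if_neg (Ne.symm h)]
    exact hp.coeff_eq_zero (by simpa [Finsupp.degree_eq_zero_iff] using h)

lemma pderiv_isHomog {p : MvPolynomial (Fin n) K} {d : ℕ} (hp : p.IsHomogeneous d)
    (i : Fin n) : (pderiv i p).IsHomogeneous (d - 1) := by
  have hrw : pderiv i p = ∑ m ∈ p.support, pderiv i (monomial m (coeff m p)) := by
    conv_lhs => rw [p.as_sum]
    exact map_sum _ _ _
  rw [hrw]
  apply IsHomogeneous.sum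
  intro m hm
  rw [pderiv_monomial]
  by_cases h0 : m i = 0
  · simp [h0, isHomogeneous_zero]
  · apply isHomogeneous_monomial
    have hmd : m.degree = d := by
      rw [Finsupp.degree_eq_weight_one]; exact hp (mem_support_iff.mp hm)
    have key : ∀ (s : Fin n →₀ ℕ), s.degree = ∑ j ∈ Finset.univ.erase i, s j + s i := by
      intro s
      rw [degree_fin, ← Finset.sum_erase_add _ _ (Finset.mem_univ i)]
    have e1 := key (m - Finsupp.single i 1)
    have e2 := key m
    have h1 : ∀ j ∈ Finset.univ.erase i, (m - Finsupp.single i 1 : Fin n →₀ ℕ) j = m j := by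
      intro j hj
      rw [Finsupp.tsub_apply, Finsupp.single_apply,
        if_neg (Ne.symm (Finset.ne_of_mem_erase hj)), tsub_zero]
    rw [Finset.sum_congr rfl h1] at e1
    have h2 : (m - Finsupp.single i 1 : Fin n →₀ ℕ) i = m i - 1 := by simp
    rw [e1, h2, ← hmd, e2, Nat.add_sub_assoc (Nat.one_le_iff_ne_zero.mpr h0)]

lemma X_mul_pderiv_monomial (i : Fin n) (m : Fin n →₀ ℕ) (c : K) :
    X i * pderiv i (monomial m c) = monomial m (c * (m i : K)) := by
  rw [pderiv_monomial, X, monomial_mul, one_mul]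
  by_cases h : m i = 0
  · simp [h]
  · have hm' : Finsupp.single i 1 + (m - Finsupp.single i 1) = m := by
      ext j
      rw [Finsupp.add_apply, Finsupp.tsub_apply, Finsupp.single_apply]
      by_cases hji : i = j
      · subst hji; rw [if_pos rfl]; omega
      · simp [hji]
    rw [hm']

lemma euler {d : ℕ} {p : MvPolynomial (Fin n) K} (hp : p.IsHomogeneous d) :
    ∑ i : Fin n, X i * pderiv i p = (d : K) • p := by
  have key : ∀ i : Fin n, X i * pderiv i p
      = ∑ m ∈ p.support, monomial m (coeff m p * (m i : K)) := by
    intro i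
    conv_lhs => rw [p.as_sum]
    rw [map_sum, Finset.mul_sum]
    exact Finset.sum_congr rfl fun m _ => X_mul_pderiv_monomial i m _
  rw [Finset.sum_congr rfl fun i _ => key i, Finset.sum_comm]
  conv_rhs => rw [p.as_sum]
  rw [Finset.smul_sum]
  refine Finset.sum_congr rfl fun m hm => ?_
  rw [← map_sum, ← Finset.mul_sum, smul_monomial]
  congr 1
  have hmd : m.degree = d := by
    rw [Finsupp.degree_eq_weight_one]; exact hp (mem_support_iff.mp hm)
  rw [← Nat.cast_sum, ← degree_fin, hmd, smul_eq_mul, mul_comm]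

lemma euler_eval {d : ℕ} {p : MvPolynomial (Fin n) K} (hp : p.IsHomogeneous d)
    (a : Fin n → K) :
    ∑ i : Fin n, a i * eval a (pderiv i p) = (d : K) * eval a p := by
  have h := congrArg (eval a) (euler hp)
  rw [map_sum, smul_eq_C_mul, map_mul, eval_C] at h
  simp only [map_mul, eval_X] at h
  exact h

lemma homog_one_eq_lin {h : MvPolynomial (Fin n) K} (hh : h.IsHomogeneous 1) :
    h = ∑ k : Fin n, C (coeff 0 (pderiv k h)) * X k := by
  have he := euler hh
  rw [Nat.cast_one, one_smul] at he
  conv_lhs => rw [← he]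
  refine Finset.sum_congr rfl fun k _ => ?_
  rw [mul_comm]
  congr 1
  exact isHomog_zero_eq_C (pderiv_isHomog hh k)

end Aux2

section Aux3
variable {K : Type*} [Field K] {n : ℕ}

/-- The linear form with coefficient vector `a`. -/
noncomputable def linF (a : Fin n → K) : MvPolynomial (Fin n) K :=
  ∑ i : Fin n, C (a i) * X i

lemma linF_isHomog (a : Fin n → K) : (linF a).IsHomogeneous 1 :=
  IsHomogeneous.sum _ _ _ fun i _ => isHomogeneous_C_mul_X _ _

lemma pderiv_linF (a : Fin n → K) (k : Fin n) : pderiv k (linF a) = C (a k) := by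
  classical
  rw [linF, map_sum]
  rw [Finset.sum_eq_single k]
  · rw [pderiv_C_mul, pderiv_X_self, mul_one]
  · intro i _ hik
    rw [pderiv_C_mul, pderiv_X_of_ne hik, mul_zero]
  · intro h; exact absurd (Finset.mem_univ k) h

lemma coeff0_pderiv_linF (a : Fin n → K) (k : Fin n) :
    coeff 0 (pderiv k (linF a)) = a k := by
  rw [pderiv_linF, coeff_C, if_pos rfl]

lemma linF_inj {a b : Fin n → K} (h : linF a = linF b) : a = b := by
  funext k
  rw [← coeff0_pderiv_linF a k, ← coeff0_pderiv_linF b k, h]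

lemma eval_linF (a b : Fin n → K) : eval a (linF b) = ∑ i, b i * a i := by
  simp [linF]

lemma linF_sub (a b : Fin n → K) : linF a - linF b = linF (a - b) := by
  rw [linF, linF, linF, ← Finset.sum_sub_distrib]
  refine Finset.sum_congr rfl fun i _ => ?_
  rw [Pi.sub_apply, map_sub, sub_mul]

lemma linF_sum {ι : Type*} (s : Finset ι) (v : ι → Fin n → K) :
    ∑ j ∈ s, linF (v j) = linF (fun k => ∑ j ∈ s, v j k) := by
  classical
  induction s using Finset.induction with
  | empty => simp [linF]
  | insert _ _ h ih =>
      rw [Finset.sum_insert h, ih, linF, linF, ← Finset.sum_add_distrib]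
      refine Finset.sum_congr rfl fun i _ => ?_
      simp only [Finset.sum_insert h, map_add, add_mul]

lemma linF_smul (c : K) (a : Fin n → K) : c • linF a = linF (fun k => c * a k) := by
  rw [linF, linF, Finset.smul_sum]
  refine Finset.sum_congr rfl fun i _ => ?_
  rw [smul_eq_C_mul, map_mul, mul_assoc]

/-- The homogeneous decomposition of a linear form. -/
lemma homog_one_eq_linF {h : MvPolynomial (Fin n) K} (hh : h.IsHomogeneous 1) :
    h = linF (fun k => coeff 0 (pderiv k h)) :=
  homog_one_eq_lin hh

lemma diffOpApply_linF (a : Fin n → K) (g : MvPolynomial (Fin n) K) :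
    diffOpApply (linF a) g = ∑ i, a i • pderiv i g := by
  rw [linF, diffOpApply_sum]
  refine Finset.sum_congr rfl fun i _ => ?_
  rw [diffOpApply_mul, diffOpApply_X, diffOpApply_C]

lemma diffOpApply_arg_add (α g g' : MvPolynomial (Fin n) K) :
    diffOpApply α (g + g') = diffOpApply α g + diffOpApply α g' := by
  simp only [diffOpApply, map_add]

lemma diffOpApply_arg_smul (α : MvPolynomial (Fin n) K) (c : K) (g : MvPolynomial (Fin n) K) :
    diffOpApply α (c • g) = c • diffOpApply α g := by
  simp only [diffOpApply, map_smul]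

lemma diffOpApply_arg_sum {ι : Type*} (α : MvPolynomial (Fin n) K) (s : Finset ι)
    (g : ι → MvPolynomial (Fin n) K) :
    diffOpApply α (∑ i ∈ s, g i) = ∑ i ∈ s, diffOpApply α (g i) := by
  simp only [diffOpApply, map_sum]

lemma diffOpApply_linF_isHomog {g : MvPolynomial (Fin n) K} {e : ℕ}
    (hg : g.IsHomogeneous (e + 1)) (a : Fin n → K) :
    (diffOpApply (linF a) g).IsHomogeneous e := by
  rw [diffOpApply_linF]
  refine IsHomogeneous.sum _ _ _ fun i _ => ?_
  rw [smul_eq_C_mul]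
  exact (by simpa using pderiv_isHomog hg i : (pderiv i g).IsHomogeneous e).C_mul _

lemma pderiv_diffOpApply_linF (a : Fin n → K) (g : MvPolynomial (Fin n) K) (k : Fin n) :
    pderiv k (diffOpApply (linF a) g) = diffOpApply (linF a) (pderiv k g) := by
  rw [diffOpApply_linF, diffOpApply_linF, map_sum]
  refine Finset.sum_congr rfl fun i _ => ?_
  rw [smul_eq_C_mul, smul_eq_C_mul, pderiv_C_mul, pderiv_comm']

lemma diffOpApply_linF_of_homog_one {g : MvPolynomial (Fin n) K}
    (hg : g.IsHomogeneous 1) (a : Fin n → K) :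
    diffOpApply (linF a) g = C (eval a g) := by
  have h0 : (diffOpApply (linF a) g).IsHomogeneous 0 := diffOpApply_linF_isHomog hg a
  rw [isHomog_zero_eq_C h0]
  congr 1
  rw [diffOpApply_linF]
  have hcs : ∀ i : Fin n, coeff 0 (pderiv i g) = eval a (pderiv i g) := by
    intro i
    have h0i : (pderiv i g).IsHomogeneous 0 := by simpa using pderiv_isHomog hg i
    conv_rhs => rw [isHomog_zero_eq_C h0i]
    rw [eval_C]
  calc coeff 0 (∑ i, a i • pderiv i g) = ∑ i, a i * coeff 0 (pderiv i g) := by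
        simp [MvPolynomial.coeff_sum, coeff_smul]
    _ = ∑ i, a i * eval a (pderiv i g) := by
        exact Finset.sum_congr rfl fun i _ => by rw [hcs i]
    _ = eval a g := by
        have := euler_eval hg a
        rw [Nat.cast_one, one_mul] at this
        exact this

end Aux3

section Aux4
variable {K : Type*} [Field K] [CharZero K] {n : ℕ}

lemma eval_diffOpApply_linF {d : ℕ} {g : MvPolynomial (Fin n) K} (hg : g.IsHomogeneous d)
    (a : Fin n → K) : eval a (diffOpApply (linF a) g) = (d : K) * eval a g := by
  rw [diffOpApply_linF, map_sum, ← euler_eval hg a]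
  refine Finset.sum_congr rfl fun i _ => ?_
  rw [smul_eq_C_mul, map_mul, eval_C]

lemma diffOpApply_isHomog (k : ℕ) :
    ∀ (α : MvPolynomial (Fin n) K), α.IsHomogeneous k →
    ∀ {d : ℕ} (g : MvPolynomial (Fin n) K), g.IsHomogeneous d →
    (diffOpApply α g).IsHomogeneous (d - k) := by
  induction k with
  | zero =>
      intro α hα d g hg
      rw [isHomog_zero_eq_C hα, diffOpApply_C, smul_eq_C_mul, Nat.sub_zero]
      exact hg.C_mul _
  | succ k ih =>
      intro α hα d g hg
      have hcast : ((k : K) + 1) ≠ 0 := by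
        have : ((k + 1 : ℕ) : K) ≠ 0 := Nat.cast_ne_zero.mpr (Nat.succ_ne_zero k)
        simpa using this
      have hα' : α = ((k : K) + 1)⁻¹ • ∑ i, X i * pderiv i α := by
        rw [euler hα, smul_smul]
        rw [Nat.cast_add, Nat.cast_one, inv_mul_cancel₀ hcast, one_smul]
      rw [hα', diffOpApply_smul, smul_eq_C_mul]
      apply IsHomogeneous.C_mul
      rw [diffOpApply_sum]
      refine IsHomogeneous.sum _ _ _ fun i _ => ?_
      rw [diffOpApply_mul, diffOpApply_X]
      have hβ : (pderiv i α).IsHomogeneous k := by simpa using pderiv_isHomog hα i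
      have := pderiv_isHomog (ih (pderiv i α) hβ g hg) i
      simpa [Nat.sub_sub] using this

lemma diffOpApply_linF_pow3 {f : MvPolynomial (Fin n) K} (hf : f.IsHomogeneous 3)
    (a : Fin n → K) :
    diffOpApply (linF a ^ 3) f = C (6 * eval a f) := by
  have h2 : (diffOpApply (linF a) f).IsHomogeneous 2 := diffOpApply_linF_isHomog hf a
  have h1 : (diffOpApply (linF a) (diffOpApply (linF a) f)).IsHomogeneous 1 :=
    diffOpApply_linF_isHomog h2 a
  have hpow : linF a ^ 3 = linF a * (linF a * linF a) := by ring
  rw [hpow, diffOpApply_mul, diffOpApply_mul,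
    diffOpApply_linF_of_homog_one h1 a, eval_diffOpApply_linF h2 a,
    eval_diffOpApply_linF hf a]
  congr 1
  push_cast
  ring

lemma key_mul {f : MvPolynomial (Fin n) K} (hf : f.IsHomogeneous 3) (a b : Fin n → K) :
    diffOpApply (linF a * linF b) f
      = linF (fun k => ∑ j, eval a (pderiv k (pderiv j f)) * b j) := by
  rw [diffOpApply_mul, diffOpApply_linF b f, diffOpApply_arg_sum]
  have hj : ∀ j : Fin n, diffOpApply (linF a) (b j • pderiv j f)
      = linF (fun k => eval a (pderiv k (pderiv j f)) * b j) := by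
    intro j
    rw [diffOpApply_arg_smul]
    have hu : (pderiv j f).IsHomogeneous 2 := by simpa using pderiv_isHomog hf j
    have hD : (diffOpApply (linF a) (pderiv j f)).IsHomogeneous 1 :=
      diffOpApply_linF_isHomog hu a
    rw [homog_one_eq_linF hD, linF_smul]
    congr 1
    funext k
    have hv : (pderiv k (pderiv j f)).IsHomogeneous 1 := by simpa using pderiv_isHomog hu k
    rw [pderiv_diffOpApply_linF, diffOpApply_linF_of_homog_one hv a]
    simp [mul_comm]
  rw [Finset.sum_congr rfl fun j _ => hj j, linF_sum]

end Aux4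

section Aux5
variable {K : Type*} [Field K] {n : ℕ}

lemma mk_eq_mk_iffD (f α β : MvPolynomial (Fin n) K) :
    Ideal.Quotient.mk (annIdeal f) α = Ideal.Quotient.mk (annIdeal f) β ↔
      diffOpApply α f = diffOpApply β f := by
  rw [Ideal.Quotient.eq]
  have h : (α - β ∈ annIdeal f) ↔ diffOpApply (α - β) f = 0 := Iff.rfl
  rw [h, diffOpApply_sub, sub_eq_zero]

lemma linF_zero : linF (0 : Fin n → K) = 0 := by simp [linF]

end Aux5

/-- Maeno–Watanabe criterion: a standard graded Artinian Gorenstein algebra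
`A = Q/Ann_f` of socle degree `3` associated to a cubic form `f` (not a cone, i.e. with
linearly independent first partials) has the Strong Lefschetz Property — there is a
linear form `L` such that multiplication `·L^{3-2k} : A_k → A_{3-k}` is bijective for
`k = 0, 1` — if and only if the Hessian determinant of `f` is not identically zero. -/
theorem slp_iff_hessian_det_ne_zero
    {K : Type*} [Field K] [CharZero K] {N : ℕ}
    (f : MvPolynomial (Fin (N + 1)) K) (hf : f.IsHomogeneous 3)
    (hli : LinearIndependent K (fun i : Fin (N + 1) => pderiv i f)) :
    (∃ L : MvPolynomial (Fin (N + 1)) K, L.IsHomogeneous 1 ∧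
      Set.BijOn (fun y => (Ideal.Quotient.mk (annIdeal f) L) ^ 3 * y)
        {y | ∃ g : MvPolynomial (Fin (N + 1)) K, g.IsHomogeneous 0 ∧
          Ideal.Quotient.mk (annIdeal f) g = y}
        {y | ∃ g : MvPolynomial (Fin (N + 1)) K, g.IsHomogeneous 3 ∧
          Ideal.Quotient.mk (annIdeal f) g = y} ∧
      Set.BijOn (fun y => (Ideal.Quotient.mk (annIdeal f) L) * y)
        {y | ∃ g : MvPolynomial (Fin (N + 1)) K, g.IsHomogeneous 1 ∧
          Ideal.Quotient.mk (annIdeal f) g = y}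
        {y | ∃ g : MvPolynomial (Fin (N + 1)) K, g.IsHomogeneous 2 ∧
          Ideal.Quotient.mk (annIdeal f) g = y}) ↔
    Matrix.det (Matrix.of fun i j : Fin (N + 1) => pderiv i (pderiv j f)) ≠ 0 := by
  classical
  set M : Matrix (Fin (N + 1)) (Fin (N + 1)) (MvPolynomial (Fin (N + 1)) K) :=
    Matrix.of fun i j => pderiv i (pderiv j f) with hM
  set mk := Ideal.Quotient.mk (annIdeal f) with hmk
  -- the Hessian matrix evaluated at a point
  have hHmat : ∀ a : Fin (N + 1) → K, (M.map (eval a)) = fun k j =>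
      eval a (pderiv k (pderiv j f)) := fun a => rfl
  have hbzero : ∀ b : Fin (N + 1) → K, diffOpApply (linF b) f = 0 → b = 0 := by
    intro b hb
    rw [diffOpApply_linF] at hb
    funext i
    exact (Fintype.linearIndependent_iff.mp hli b hb) i
  constructor
  · rintro ⟨L, hL1, _, hbij1⟩
    set a : Fin (N + 1) → K := fun k => coeff 0 (pderiv k L) with ha
    have hLlin : L = linF a := homog_one_eq_linF hL1
    have hdeta : (M.map (eval a)).det ≠ 0 := by
      rw [Ne, ← Matrix.exists_mulVec_eq_zero_iff]
      rintro ⟨b, hb0, hb⟩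
      apply hb0
      have hk : ∀ k, ∑ j, eval a (pderiv k (pderiv j f)) * b j = 0 := by
        intro k
        have := congrFun hb k
        simpa [Matrix.mulVec, dotProduct, hHmat, hM] using this
      have hkey : diffOpApply (L * linF b) f = 0 := by
        rw [hLlin, key_mul hf a b]
        have : (fun k => ∑ j, eval a (pderiv k (pderiv j f)) * b j)
            = (0 : Fin (N + 1) → K) := funext hk
        rw [this, linF_zero]
      have h1 : mk (L * linF b) = mk (L * 0) := by
        rw [mk_eq_mk_iffD, hkey, mul_zero, diffOpApply_zero]
      have hmem1 : mk (linF b) ∈ {y | ∃ g : MvPolynomial (Fin (N + 1)) K,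
          g.IsHomogeneous 1 ∧ mk g = y} := ⟨linF b, linF_isHomog b, rfl⟩
      have hmem2 : mk (0 : MvPolynomial (Fin (N + 1)) K) ∈
          {y | ∃ g : MvPolynomial (Fin (N + 1)) K, g.IsHomogeneous 1 ∧ mk g = y} :=
        ⟨0, isHomogeneous_zero _ _ _, rfl⟩
      have := hbij1.2.1 hmem1 hmem2 (by
        show mk L * mk (linF b) = mk L * mk 0
        rw [← map_mul, ← map_mul, h1])
      rw [mk_eq_mk_iffD] at this
      simp only [diffOpApply_zero] at this
      exact hbzero b this
    intro hdet0
    apply hdeta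
    have : (eval a) M.det = ((eval a : MvPolynomial (Fin (N+1)) K →+* K).mapMatrix M).det :=
      RingHom.map_det _ M
    rw [hdet0, map_zero] at this
    rw [show M.map (eval a) = ((eval a : MvPolynomial (Fin (N+1)) K →+* K).mapMatrix M) from rfl]
    exact this.symm
  · intro hdet
    have hf0 : f ≠ 0 := by
      intro h
      exact hli.ne_zero 0 (by rw [h, map_zero])
    obtain ⟨a, ha⟩ : ∃ a : Fin (N + 1) → K, eval a (f * M.det) ≠ 0 := by
      by_contra h
      push_neg at h
      exact mul_ne_zero hf0 hdet
        (MvPolynomial.funext fun x => by simpa using h x)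
    rw [map_mul] at ha
    have hfa : eval a f ≠ 0 := fun h => ha (by rw [h, zero_mul])
    have hdeta : (M.map (eval a)).det ≠ 0 := by
      rw [show M.map (eval a) = ((eval a : MvPolynomial (Fin (N+1)) K →+* K).mapMatrix M) from rfl,
        ← RingHom.map_det]
      exact fun h => ha (by rw [h, mul_zero])
    have h6fa : (6 : K) * eval a f ≠ 0 := mul_ne_zero (by norm_num) hfa
    have hL3 : ((linF a : MvPolynomial (Fin (N + 1)) K) ^ 3).IsHomogeneous 3 := by
      simpa using (linF_isHomog a).pow 3
    refine ⟨linF a, linF_isHomog a, ?_, ?_⟩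
    · refine ⟨?_, ?_, ?_⟩
      · rintro y ⟨g, hg0, rfl⟩
        refine ⟨linF a ^ 3 * g, by simpa using hL3.mul hg0, ?_⟩
        show mk _ = mk (linF a) ^ 3 * mk g
        rw [map_mul, map_pow]
      · rintro y1 ⟨g1, hg1, rfl⟩ y2 ⟨g2, hg2, rfl⟩ heq
        have h1 : mk (linF a ^ 3 * g1) = mk (linF a ^ 3 * g2) := by
          simpa [map_mul, map_pow] using heq
        rw [mk_eq_mk_iffD, diffOpApply_mul, diffOpApply_mul] at h1
        rw [isHomog_zero_eq_C hg1, isHomog_zero_eq_C hg2, diffOpApply_C, diffOpApply_C,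
          diffOpApply_arg_smul, diffOpApply_arg_smul, diffOpApply_linF_pow3 hf a] at h1
        have : coeff 0 g1 = coeff 0 g2 := by
          have h2 := congrArg (coeff 0) h1
          simp only [coeff_smul, coeff_C, if_pos rfl, smul_eq_mul] at h2
          exact mul_right_cancel₀ h6fa h2
        rw [isHomog_zero_eq_C hg1, isHomog_zero_eq_C hg2, this]
      · rintro y ⟨g, hg3, rfl⟩
        have hΦ : (diffOpApply g f).IsHomogeneous 0 := by
          simpa using diffOpApply_isHomog 3 g hg3 f hf
        set t := coeff 0 (diffOpApply g f) with ht
        set c := t / (6 * eval a f) with hc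
        refine ⟨mk (C c), ⟨C c, isHomogeneous_C _ _, rfl⟩, ?_⟩
        show mk (linF a) ^ 3 * mk (C c) = mk g
        rw [← map_pow, ← map_mul, mk_eq_mk_iffD, diffOpApply_mul, diffOpApply_C,
          diffOpApply_arg_smul, diffOpApply_linF_pow3 hf a]
        rw [isHomog_zero_eq_C hΦ, ← ht]
        rw [smul_eq_C_mul, ← map_mul, hc, div_mul_cancel₀ _ h6fa]
    · have hmv : ∀ b : Fin (N + 1) → K,
          diffOpApply (linF a * linF b) f = linF ((M.map (eval a)).mulVec b) := by
        intro b
        rw [key_mul hf a b]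
        congr 1
      refine ⟨?_, ?_, ?_⟩
      · rintro y ⟨g, hg1, rfl⟩
        refine ⟨linF a * g, by simpa using (linF_isHomog a).mul hg1, ?_⟩
        show mk _ = mk (linF a) * mk g
        rw [map_mul]
      · rintro y1 ⟨g1, hg1, rfl⟩ y2 ⟨g2, hg2, rfl⟩ heq
        have h1 : mk (linF a * g1) = mk (linF a * g2) := by
          simpa [map_mul] using heq
        rw [mk_eq_mk_iffD] at h1
        rw [homog_one_eq_linF hg1, homog_one_eq_linF hg2] at h1 ⊢
        set b1 : Fin (N + 1) → K := fun k => coeff 0 (pderiv k g1)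
        set b2 : Fin (N + 1) → K := fun k => coeff 0 (pderiv k g2)
        rw [hmv b1, hmv b2] at h1
        have hvec : (M.map (eval a)).mulVec b1 = (M.map (eval a)).mulVec b2 := linF_inj h1
        have hb12 : b1 = b2 := by
          by_contra hne
          have hsub : (M.map (eval a)).mulVec (b1 - b2) = 0 := by
            rw [Matrix.mulVec_sub, hvec, sub_self]
          exact hdeta (Matrix.exists_mulVec_eq_zero_iff.mp
            ⟨b1 - b2, sub_ne_zero.mpr hne, hsub⟩)
        rw [hb12]
      · rintro y ⟨g, hg2, rfl⟩
        have hΦ : (diffOpApply g f).IsHomogeneous 1 := by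
          simpa using diffOpApply_isHomog 2 g hg2 f hf
        set c : Fin (N + 1) → K := fun k => coeff 0 (pderiv k (diffOpApply g f)) with hcdef
        have hΦlin : diffOpApply g f = linF c := homog_one_eq_linF hΦ
        set b : Fin (N + 1) → K := (M.map (eval a))⁻¹.mulVec c with hbdef
        refine ⟨mk (linF b), ⟨linF b, linF_isHomog b, rfl⟩, ?_⟩
        show mk (linF a) * mk (linF b) = mk g
        rw [← map_mul, mk_eq_mk_iffD, hmv b, hΦlin]
        congr 1
        rw [hbdef, Matrix.mulVec_mulVec, Matrix.mul_nonsing_inv _ (isUnit_iff_ne_zero.mpr hdeta),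
          Matrix.one_mulVec]
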